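/- Let X₁, X₂, Y be Banach spaces, X := X₁ × X₂, and f : X → Y a mapping which is continuous with respect to the second variable (every partial map f(a₁,·) is continuous on X₂). Then the set D₁(f) of points x ∈ X at which the partial Fréchet derivative of f with respect to the first variable exists is an F_{σδ} set. -/

import Mathlib

open Metric Set Topology

/-- An `Fσ` set: a countable union of closed sets. -/
def IsFSigma {Z : Type*} [TopologicalSpace Z] (s : Set Z) : Prop :=
  ∃ u : ℕ → Set Z, (∀ n, IsClosed (u n)) ∧ s = ⋃ n, u n

/-- An `Fσδ` set: a countable intersection of `Fσ` sets. -/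
def IsFSigmaDelta {Z : Type*} [TopologicalSpace Z] (s : Set Z) : Prop :=
  ∃ u : ℕ → Set Z, (∀ n, IsFSigma (u n)) ∧ s = ⋂ n, u n

set_option maxHeartbeats 2000000

open Filter Asymptotics

namespace PFAux

variable {X₁ X₂ Y : Type*} [NormedAddCommGroup X₁] [NormedSpace ℝ X₁]
  [NormedAddCommGroup X₂] [NormedSpace ℝ X₂]
  [NormedAddCommGroup Y] [NormedSpace ℝ Y]

/-- Approximating sets. -/
def Aset (f : X₁ × X₂ → Y) (n k : ℕ) : Set (X₁ × X₂) :=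
  {x | ∃ L : X₁ →L[ℝ] Y, ‖L‖ ≤ (n : ℝ) + 1 ∧
    ∀ h : X₁, ‖h‖ ≤ ((n : ℝ) + 1)⁻¹ →
      ‖f (x.1 + h, x.2) - f (x.1, x.2) - L h‖ ≤ ‖h‖ / ((k : ℝ) + 1)}

lemma foldr_min_pos {d : ℝ} (hd : 0 < d) :
    ∀ L : List ℝ, (∀ a ∈ L, 0 < a) → 0 < L.foldr min d
  | [], _ => hd
  | a :: t, h => lt_min (h a List.mem_cons_self)
      (foldr_min_pos hd t fun b hb => h b (List.mem_cons_of_mem _ hb))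

lemma foldr_min_le_mem {d : ℝ} :
    ∀ (L : List ℝ) (a : ℝ), a ∈ L → L.foldr min d ≤ a
  | b :: t, a, ha => by
    rcases List.mem_cons.mp ha with h | h
    · subst h; exact min_le_left _ _
    · exact le_trans (min_le_right _ _) (foldr_min_le_mem t a h)

lemma foldr_min_le_init {d : ℝ} : ∀ L : List ℝ, L.foldr min d ≤ d
  | [] => le_rfl
  | _ :: t => le_trans (min_le_right _ _) (foldr_min_le_init t)

lemma isOpen_list_forall {α ι : Type*} [TopologicalSpace α] (s : ι → Set α) :
    ∀ L : List ι, (∀ i ∈ L, IsOpen (s i)) → IsOpen {b : α | ∀ i ∈ L, b ∈ s i}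
  | [], _ => by simpa using isOpen_univ
  | a :: t, h => by
    have he : {b : α | ∀ i ∈ a :: t, b ∈ s i} = s a ∩ {b | ∀ i ∈ t, b ∈ s i} := by
      ext b; simp [List.forall_mem_cons]
    rw [he]
    exact (h a (by simp)).inter (isOpen_list_forall s t fun i hi => h i (by simp [hi]))

lemma master {f : X₁ × X₂ → Y} (hf : ∀ a₁ : X₁, Continuous (fun t : X₂ => f (a₁, t)))
    {x : X₁ × X₂} {n k : ℕ} (hx : x ∈ closure (Aset f n k))
    (l : List (ℕ × X₁)) (hl : ∀ p ∈ l, ‖p.2‖ < ((p.1 : ℝ) + 1) * ((n : ℝ) + 1)⁻¹)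
    {ε : ℝ} (hε : 0 < ε) :
    ∃ L : X₁ →L[ℝ] Y, ‖L‖ ≤ (n : ℝ) + 1 ∧ ∀ p ∈ l,
      ‖((p.1 : ℝ) + 1) • (f (x.1 + ((p.1 : ℝ) + 1)⁻¹ • p.2, x.2) - f (x.1, x.2)) - L p.2‖
        ≤ ‖p.2‖ / ((k : ℝ) + 1) + ε := by
  set δ : ℝ := ((n : ℝ) + 1)⁻¹ with hδdef
  have hδ : 0 < δ := by positivity
  have hk1 : (0:ℝ) < (k : ℝ) + 1 := by positivity
  set w : ℕ × X₁ → X₁ := fun p => ((p.1 : ℝ) + 1)⁻¹ • p.2 with hwdef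
  have hm : ∀ p : ℕ × X₁, (0:ℝ) < (p.1 : ℝ) + 1 := fun p => by positivity
  have hwn : ∀ p ∈ l, ‖w p‖ < δ := by
    intro p hp
    have h1 := hl p hp
    have h2 : ‖w p‖ = ((p.1 : ℝ) + 1)⁻¹ * ‖p.2‖ := by
      rw [hwdef]
      simp [norm_smul, abs_of_pos (hm p)]
    rw [h2, inv_mul_lt_iff₀ (hm p)]
    linarith
  set φ : ℕ × X₁ → ℝ := fun p =>
    min (δ - ‖w p‖) (ε * ((k:ℝ)+1) / (4 * ((p.1:ℝ)+1))) with hφdef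
  set η : ℝ := (l.map φ).foldr min δ with hηdef
  have hηpos : 0 < η := by
    apply foldr_min_pos hδ
    intro a ha
    obtain ⟨p, hp, rfl⟩ := List.mem_map.mp ha
    exact lt_min (by linarith [hwn p hp]) (by positivity)
  have hηδ : η ≤ δ := foldr_min_le_init _
  have hηle : ∀ p ∈ l, η ≤ φ p := fun p hp =>
    foldr_min_le_mem _ _ (List.mem_map_of_mem (f := φ) hp)
  set V : ℕ × X₁ → Set X₂ := fun p =>
    {b | ‖f (x.1 + w p, b) - f (x.1 + w p, x.2)‖ < ε / (4 * ((p.1:ℝ)+1))} ∩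
    {b | ‖f (x.1, b) - f (x.1, x.2)‖ < ε / (4 * ((p.1:ℝ)+1))} with hVdef
  have hVopen : ∀ p ∈ l, IsOpen (V p) := by
    intro p _
    apply IsOpen.inter
    · exact isOpen_lt (((hf _).sub continuous_const).norm) continuous_const
    · exact isOpen_lt (((hf _).sub continuous_const).norm) continuous_const
  have hxV : ∀ p ∈ l, x.2 ∈ V p := by
    intro p _
    constructor <;>
      · simp only [mem_setOf_eq, sub_self, norm_zero]
        positivity
  have hUopen : IsOpen ((ball x.1 η) ×ˢ {b : X₂ | ∀ p ∈ l, b ∈ V p}) :=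
    isOpen_ball.prod (isOpen_list_forall V l hVopen)
  have hxU : x ∈ (ball x.1 η) ×ˢ {b : X₂ | ∀ p ∈ l, b ∈ V p} :=
    ⟨mem_ball_self hηpos, fun p hp => hxV p hp⟩
  obtain ⟨⟨a, b⟩, ⟨ha, hb⟩, L, hL, hA⟩ :=
    _root_.mem_closure_iff.mp hx _ hUopen hxU
  refine ⟨L, hL, ?_⟩
  intro p hp
  set e : X₁ := x.1 - a with hedef
  have he : ‖e‖ < η := by
    rw [hedef, ← dist_eq_norm]
    rw [mem_ball, dist_comm] at ha
    exact ha
  have hφp := hηle p hp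
  have hwδ : ‖w p‖ < δ := hwn p hp
  have hwe : ‖w p + e‖ ≤ δ := by
    have h3 : η ≤ δ - ‖w p‖ := le_trans hφp (min_le_left _ _)
    calc ‖w p + e‖ ≤ ‖w p‖ + ‖e‖ := norm_add_le _ _
    _ ≤ δ := by linarith
  have heδ : ‖e‖ ≤ δ := le_trans he.le hηδ
  have est1 := hA (w p + e) hwe
  have est2 := hA e heδ
  have hawe : a + (w p + e) = x.1 + w p := by rw [hedef]; abel
  have hae : a + e = x.1 := by rw [hedef]; abel
  rw [hawe] at est1
  rw [hae] at est2
  have t1 : ‖f (x.1 + w p, b) - f (x.1, b) - L (w p)‖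
      ≤ (‖w p‖ + 2 * ‖e‖) / ((k:ℝ)+1) := by
    have heq : f (x.1 + w p, b) - f (x.1, b) - L (w p)
        = (f (x.1 + w p, b) - f (a, b) - L (w p + e))
          - (f (x.1, b) - f (a, b) - L e) := by
      rw [map_add]; abel
    rw [heq]
    have h4 := norm_sub_le (f (x.1 + w p, b) - f (a, b) - L (w p + e))
      (f (x.1, b) - f (a, b) - L e)
    have h5 : ‖w p + e‖ ≤ ‖w p‖ + ‖e‖ := norm_add_le _ _
    have h6 : ‖w p + e‖ / ((k:ℝ)+1) ≤ (‖w p‖ + ‖e‖) / ((k:ℝ)+1) := by gcongr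
    have h7 : (‖w p‖ + ‖e‖) / ((k:ℝ)+1) + ‖e‖ / ((k:ℝ)+1)
        = (‖w p‖ + 2*‖e‖) / ((k:ℝ)+1) := by ring
    linarith
  obtain ⟨hb1, hb2⟩ := hb p hp
  simp only [mem_setOf_eq] at hb1 hb2
  have t2 : ‖(f (x.1 + w p, x.2) - f (x.1, x.2)) - L (w p)‖
      ≤ (‖w p‖ + 2*‖e‖)/((k:ℝ)+1) + ε/(4*((p.1:ℝ)+1)) + ε/(4*((p.1:ℝ)+1)) := by
    have heq : (f (x.1 + w p, x.2) - f (x.1, x.2)) - L (w p)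
        = (f (x.1 + w p, x.2) - f (x.1 + w p, b))
          + (f (x.1 + w p, b) - f (x.1, b) - L (w p))
          + (f (x.1, b) - f (x.1, x.2)) := by abel
    rw [heq]
    have h8 := norm_add₃_le (a := f (x.1 + w p, x.2) - f (x.1 + w p, b))
      (b := f (x.1 + w p, b) - f (x.1, b) - L (w p)) (c := f (x.1, b) - f (x.1, x.2))
    have h9 : ‖f (x.1 + w p, x.2) - f (x.1 + w p, b)‖
        = ‖f (x.1 + w p, b) - f (x.1 + w p, x.2)‖ := norm_sub_rev _ _
    linarith
  have hmp := hm p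
  have hsmul : ((p.1:ℝ)+1) • (w p) = p.2 := by
    rw [hwdef, smul_smul, mul_inv_cancel₀ (ne_of_gt hmp), one_smul]
  have hLp : L p.2 = ((p.1:ℝ)+1) • L (w p) := by rw [← map_smul, hsmul]
  have hnorm : ‖((p.1:ℝ)+1) • (f (x.1 + w p, x.2) - f (x.1, x.2)) - L p.2‖
      = ((p.1:ℝ)+1) * ‖(f (x.1 + w p, x.2) - f (x.1, x.2)) - L (w p)‖ := by
    rw [hLp, ← smul_sub, norm_smul, Real.norm_eq_abs, abs_of_pos hmp]
  have hp2 : ‖p.2‖ = ((p.1:ℝ)+1) * ‖w p‖ := by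
    rw [← hsmul, norm_smul, Real.norm_eq_abs, abs_of_pos hmp]
  have he2 : ‖e‖ ≤ ε * ((k:ℝ)+1) / (4*((p.1:ℝ)+1)) :=
    le_trans he.le (le_trans hφp (min_le_right _ _))
  rw [hnorm]
  have step1 : ((p.1:ℝ)+1) * ‖(f (x.1 + w p, x.2) - f (x.1, x.2)) - L (w p)‖
      ≤ ((p.1:ℝ)+1) * ((‖w p‖ + 2*‖e‖)/((k:ℝ)+1) + ε/(4*((p.1:ℝ)+1)) + ε/(4*((p.1:ℝ)+1))) :=
    mul_le_mul_of_nonneg_left t2 hmp.le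
  have hquart : ((p.1:ℝ)+1) * (ε/(4*((p.1:ℝ)+1))) = ε/4 := by
    field_simp
  have he2' : ‖e‖ * (4*((p.1:ℝ)+1)) ≤ ε * ((k:ℝ)+1) := by
    rw [← le_div_iff₀ (by positivity)]
    exact he2
  have hB0 : ((p.1:ℝ)+1) * (‖w p‖ + 2*‖e‖) ≤ ‖p.2‖ + (ε/2) * ((k:ℝ)+1) := by
    nlinarith [hp2]
  have hB : ((p.1:ℝ)+1) * ((‖w p‖ + 2*‖e‖)/((k:ℝ)+1)) ≤ ‖p.2‖/((k:ℝ)+1) + ε/2 := by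
    have hc1 : ((p.1:ℝ)+1) * ((‖w p‖ + 2*‖e‖)/((k:ℝ)+1))
        = (((p.1:ℝ)+1) * (‖w p‖ + 2*‖e‖))/((k:ℝ)+1) := by ring
    have hc2 : (‖p.2‖ + (ε/2) * ((k:ℝ)+1))/((k:ℝ)+1) = ‖p.2‖/((k:ℝ)+1) + ε/2 := by
      rw [add_div, mul_div_assoc, div_self (ne_of_gt hk1), mul_one]
    rw [hc1, ← hc2]
    gcongr
  have hexp : ((p.1:ℝ)+1) * ((‖w p‖ + 2*‖e‖)/((k:ℝ)+1) + ε/(4*((p.1:ℝ)+1)) + ε/(4*((p.1:ℝ)+1)))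
      = ((p.1:ℝ)+1) * ((‖w p‖ + 2*‖e‖)/((k:ℝ)+1))
        + ((p.1:ℝ)+1) * (ε/(4*((p.1:ℝ)+1))) + ((p.1:ℝ)+1) * (ε/(4*((p.1:ℝ)+1))) := by
    ring
  rw [hexp] at step1
  linarith

lemma norm_le_zero_of_forall {Y : Type*} [NormedAddCommGroup Y] {z : Y} {c : ℝ}
    (h : ∀ k : ℕ, ‖z‖ ≤ c / ((k:ℝ)+1)) : z = 0 := by
  rw [← norm_le_zero_iff]
  have ht : Tendsto (fun k : ℕ => c / ((k:ℝ)+1)) atTop (𝓝 0) := by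
    have h2 := tendsto_one_div_add_atTop_nhds_zero_nat.const_mul c
    rw [mul_zero] at h2
    refine h2.congr fun k => ?_
    rw [mul_one_div]
  exact ge_of_tendsto' ht h

lemma backward {f : X₁ × X₂ → Y} (hf : ∀ a₁ : X₁, Continuous (fun t : X₂ => f (a₁, t)))
    [CompleteSpace Y] {x : X₁ × X₂}
    (hx : ∀ k : ℕ, ∃ n : ℕ, x ∈ closure (Aset f n k)) :
    DifferentiableAt ℝ (fun t : X₁ => f (t, x.2)) x.1 := by
  choose n hn using hx
  set δ : ℕ → ℝ := fun k => ((n k : ℝ) + 1)⁻¹ with hδdef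
  have hδ : ∀ k, 0 < δ k := fun k => by positivity
  set u : ℕ → X₁ → Y := fun m h =>
    ((m:ℝ)+1) • (f (x.1 + ((m:ℝ)+1)⁻¹ • h, x.2) - f (x.1, x.2)) with hudef
  have hu0 : ∀ h : X₁, u 0 h = f (x.1 + h, x.2) - f (x.1, x.2) := by
    intro h; simp [hudef]
  have master' : ∀ (k : ℕ) (l : List (ℕ × X₁)),
      (∀ p ∈ l, ‖p.2‖ < ((p.1:ℝ)+1) * δ k) → ∀ ε : ℝ, 0 < ε →
      ∃ L : X₁ →L[ℝ] Y, ‖L‖ ≤ (n k : ℝ) + 1 ∧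
        ∀ p ∈ l, ‖u p.1 p.2 - L p.2‖ ≤ ‖p.2‖ / ((k:ℝ)+1) + ε := by
    intro k l hl ε hε
    exact master hf (hn k) l hl hε
  have pairbound : ∀ (k m m' : ℕ) (h : X₁), ‖h‖ < ((m:ℝ)+1) * δ k →
      ‖h‖ < ((m':ℝ)+1) * δ k →
      ‖u m h - u m' h‖ ≤ 2 * ‖h‖ / ((k:ℝ)+1) := by
    intro k m m' h h1 h2
    apply le_of_forall_pos_le_add
    intro ε hε
    obtain ⟨L, hL, hb⟩ := master' k [(m, h), (m', h)]
      (by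
        intro p hp
        simp only [List.mem_cons, List.mem_singleton, List.not_mem_nil, or_false] at hp
        rcases hp with rfl | rfl
        · exact h1
        · exact h2) (ε/2) (by positivity)
    have b1 := hb (m, h) (by simp)
    have b2 := hb (m', h) (by simp)
    simp only at b1 b2
    have heq : ‖u m h - u m' h‖ = ‖(u m h - L h) - (u m' h - L h)‖ := by
      congr 1; abel
    rw [heq]
    have h3 := norm_sub_le (u m h - L h) (u m' h - L h)
    have h4 : ‖h‖ / ((k:ℝ)+1) + ‖h‖ / ((k:ℝ)+1) = 2 * ‖h‖ / ((k:ℝ)+1) := by ring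
    linarith
  have hcauchy : ∀ h : X₁, CauchySeq (fun m => u m h) := by
    intro h
    rw [Metric.cauchySeq_iff']
    intro ε₀ hε₀
    obtain ⟨k, hk⟩ := exists_nat_gt (2 * ‖h‖ / ε₀)
    obtain ⟨N, hN⟩ := exists_nat_gt (‖h‖ / δ k)
    refine ⟨N, fun m hm => ?_⟩
    have hmb : ∀ j : ℕ, N ≤ j → ‖h‖ < ((j:ℝ)+1) * δ k := by
      intro j hj
      rw [div_lt_iff₀ (hδ k)] at hN
      have hcast : (N:ℝ) ≤ (j:ℝ)+1 := by
        have : (N:ℝ) ≤ (j:ℝ) := by exact_mod_cast hj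
        linarith
      nlinarith [hδ k]
    have hdist : dist (u m h) (u N h) ≤ 2*‖h‖/((k:ℝ)+1) := by
      rw [dist_eq_norm]; exact pairbound k m N h (hmb m hm) (hmb N le_rfl)
    have hlt : 2*‖h‖/((k:ℝ)+1) < ε₀ := by
      rw [div_lt_iff₀ (by positivity)]
      rw [div_lt_iff₀ hε₀] at hk
      nlinarith
    exact lt_of_le_of_lt hdist hlt
  set q : X₁ → Y := fun h => limUnder atTop (fun m => u m h) with hqdef
  have hq : ∀ h, Tendsto (fun m => u m h) atTop (𝓝 (q h)) :=
    fun h => (hcauchy h).tendsto_limUnder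
  -- additivity
  have q_add : ∀ a b : X₁, q (a + b) = q a + q b := by
    intro a b
    have hz : Tendsto (fun m => u m (a+b) - u m a - u m b) atTop
        (𝓝 (q (a+b) - q a - q b)) := ((hq (a+b)).sub (hq a)).sub (hq b)
    have hzero : q (a+b) - q a - q b = 0 := by
      apply norm_le_zero_of_forall (c := ‖a+b‖ + ‖a‖ + ‖b‖)
      intro k
      obtain ⟨N, hN⟩ := exists_nat_gt ((‖a+b‖ + ‖a‖ + ‖b‖) / δ k)
      rw [div_lt_iff₀ (hδ k)] at hN
      have hbnd : ∀ m : ℕ, N ≤ m →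
          ‖u m (a+b) - u m a - u m b‖ ≤ (‖a+b‖ + ‖a‖ + ‖b‖)/((k:ℝ)+1) := by
        intro m hm
        have hcast : (N:ℝ) ≤ (m:ℝ)+1 := by
          have : (N:ℝ) ≤ (m:ℝ) := by exact_mod_cast hm
          linarith
        have hS : ‖a+b‖ + ‖a‖ + ‖b‖ < ((m:ℝ)+1) * δ k := by nlinarith [hδ k]
        apply le_of_forall_pos_le_add
        intro ε hε
        obtain ⟨L, _, hb⟩ := master' k [(m,a),(m,b),(m,a+b)]
          (by
            intro p hp
            simp only [List.mem_cons, List.mem_singleton, List.not_mem_nil, or_false] at hp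
            rcases hp with rfl | rfl | rfl <;> simp only <;>
              nlinarith [norm_nonneg a, norm_nonneg b, norm_nonneg (a+b)])
          (ε/3) (by positivity)
        have b1 := hb (m,a) (by simp)
        have b2 := hb (m,b) (by simp)
        have b3 := hb (m,a+b) (by simp)
        simp only at b1 b2 b3
        have heq : u m (a+b) - u m a - u m b
            = (u m (a+b) - L (a+b)) - (u m a - L a) - (u m b - L b) := by
          rw [map_add]; abel
        rw [heq]
        have h5 := norm_sub_le ((u m (a+b) - L (a+b)) - (u m a - L a)) (u m b - L b)
        have h6 := norm_sub_le (u m (a+b) - L (a+b)) (u m a - L a)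
        have h7 : (‖a+b‖ + ‖a‖ + ‖b‖)/((k:ℝ)+1)
            = ‖a+b‖/((k:ℝ)+1) + ‖a‖/((k:ℝ)+1) + ‖b‖/((k:ℝ)+1) := by ring
        rw [h7]
        linarith
      exact le_of_tendsto hz.norm (eventually_atTop.mpr ⟨N, fun m hm => hbnd m hm⟩)
    rw [sub_sub, sub_eq_zero] at hzero
    exact hzero
  -- homogeneity
  have q_smul : ∀ (c : ℝ) (a : X₁), q (c • a) = c • q a := by
    intro c a
    have hz : Tendsto (fun m => u m (c • a) - c • u m a) atTop
        (𝓝 (q (c • a) - c • q a)) := (hq (c•a)).sub ((hq a).const_smul c)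
    have hzero : q (c•a) - c • q a = 0 := by
      apply norm_le_zero_of_forall (c := ‖c•a‖ + |c| * ‖a‖)
      intro k
      obtain ⟨N, hN⟩ := exists_nat_gt ((‖c•a‖ + ‖a‖) / δ k)
      rw [div_lt_iff₀ (hδ k)] at hN
      have hbnd : ∀ m : ℕ, N ≤ m →
          ‖u m (c•a) - c • u m a‖ ≤ (‖c•a‖ + |c| * ‖a‖)/((k:ℝ)+1) := by
        intro m hm
        have hcast : (N:ℝ) ≤ (m:ℝ)+1 := by
          have : (N:ℝ) ≤ (m:ℝ) := by exact_mod_cast hm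
          linarith
        have hS : ‖c•a‖ + ‖a‖ < ((m:ℝ)+1) * δ k := by nlinarith [hδ k]
        apply le_of_forall_pos_le_add
        intro ε hε
        have hc1 : (0:ℝ) < 1 + |c| := by positivity
        obtain ⟨L, _, hb⟩ := master' k [(m,a),(m,c•a)]
          (by
            intro p hp
            simp only [List.mem_cons, List.mem_singleton, List.not_mem_nil, or_false] at hp
            rcases hp with rfl | rfl <;> simp only <;>
              nlinarith [norm_nonneg a, norm_nonneg (c•a)])
          (ε/(1+|c|)) (by positivity)
        have b1 := hb (m,a) (by simp)
        have b2 := hb (m,c•a) (by simp)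
        simp only at b1 b2
        have heq : u m (c•a) - c • u m a
            = (u m (c•a) - L (c•a)) - c • (u m a - L a) := by
          rw [map_smul, smul_sub]; abel
        rw [heq]
        have h5 := norm_sub_le (u m (c•a) - L (c•a)) (c • (u m a - L a))
        have h6 : ‖c • (u m a - L a)‖ = |c| * ‖u m a - L a‖ := by
          rw [norm_smul, Real.norm_eq_abs]
        have h7 : |c| * ‖u m a - L a‖ ≤ |c| * (‖a‖/((k:ℝ)+1) + ε/(1+|c|)) :=
          mul_le_mul_of_nonneg_left b1 (abs_nonneg c)
        have h8 : ε/(1+|c|) + |c| * (ε/(1+|c|)) = ε := by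
          field_simp
        have h9 : (‖c•a‖ + |c| * ‖a‖)/((k:ℝ)+1)
            = ‖c•a‖/((k:ℝ)+1) + |c| * (‖a‖/((k:ℝ)+1)) := by ring
        rw [h9]
        nlinarith [abs_nonneg c]
      exact le_of_tendsto hz.norm (eventually_atTop.mpr ⟨N, fun m hm => hbnd m hm⟩)
    rw [sub_eq_zero] at hzero
    exact hzero
  -- boundedness
  have q_bound : ∀ h : X₁, ‖q h‖ ≤ ((n 0:ℝ) + 2) * ‖h‖ := by
    intro h
    obtain ⟨N, hN⟩ := exists_nat_gt (‖h‖ / δ 0)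
    rw [div_lt_iff₀ (hδ 0)] at hN
    have hbnd : ∀ m : ℕ, N ≤ m → ‖u m h‖ ≤ ((n 0:ℝ)+2) * ‖h‖ := by
      intro m hm
      have hcast : (N:ℝ) ≤ (m:ℝ)+1 := by
        have : (N:ℝ) ≤ (m:ℝ) := by exact_mod_cast hm
        linarith
      have hS : ‖h‖ < ((m:ℝ)+1) * δ 0 := by nlinarith [hδ 0]
      apply le_of_forall_pos_le_add
      intro ε hε
      obtain ⟨L, hL, hb⟩ := master' 0 [(m,h)]
        (by
          intro p hp
          simp only [List.mem_singleton] at hp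
          subst hp
          exact hS) ε hε
      have b1 := hb (m,h) (by simp)
      simp only [Nat.cast_zero, zero_add, div_one] at b1
      have h5 : ‖u m h‖ ≤ ‖L h‖ + ‖u m h - L h‖ := by
        have := norm_add_le (L h) (u m h - L h)
        simpa using this
      have h6 : ‖L h‖ ≤ ‖L‖ * ‖h‖ := L.le_opNorm h
      nlinarith [norm_nonneg h]
    exact le_of_tendsto (hq h).norm (eventually_atTop.mpr ⟨N, fun m hm => hbnd m hm⟩)
  -- the derivative
  let ql : X₁ →ₗ[ℝ] Y :=
    { toFun := q, map_add' := q_add, map_smul' := fun c a => q_smul c a }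
  let q' : X₁ →L[ℝ] Y := ql.mkContinuous ((n 0:ℝ)+2) q_bound
  have hder : HasFDerivAt (fun t : X₁ => f (t, x.2)) q' x.1 := by
    rw [hasFDerivAt_iff_isLittleO_nhds_zero, Asymptotics.isLittleO_iff]
    intro c hc
    obtain ⟨k, hk⟩ := exists_nat_gt (2 / c)
    have hk1 : 2 / ((k:ℝ)+1) ≤ c := by
      rw [div_le_iff₀ (by positivity)]
      rw [div_lt_iff₀ hc] at hk
      nlinarith
    have key : ∀ h : X₁, ‖h‖ < δ k →
        ‖f (x.1 + h, x.2) - f (x.1, x.2) - q h‖ ≤ c * ‖h‖ := by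
      intro h hh
      have hb : ∀ m : ℕ, ‖u m h - u 0 h‖ ≤ 2 * ‖h‖/((k:ℝ)+1) := by
        intro m
        apply pairbound k m 0 h
        · have h1 : (1:ℝ) ≤ (m:ℝ)+1 := by
            have : (0:ℝ) ≤ (m:ℝ) := by positivity
            linarith
          nlinarith [hδ k]
        · simpa using hh
      have hlim : Tendsto (fun m => u m h - u 0 h) atTop (𝓝 (q h - u 0 h)) :=
        (hq h).sub tendsto_const_nhds
      have hle : ‖q h - u 0 h‖ ≤ 2*‖h‖/((k:ℝ)+1) :=
        le_of_tendsto hlim.norm (Eventually.of_forall hb)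
      rw [hu0] at hle
      have heq : ‖f (x.1 + h, x.2) - f (x.1, x.2) - q h‖
          = ‖q h - (f (x.1 + h, x.2) - f (x.1, x.2))‖ := norm_sub_rev _ _
      rw [heq]
      calc ‖q h - (f (x.1 + h, x.2) - f (x.1, x.2))‖ ≤ 2*‖h‖/((k:ℝ)+1) := hle
      _ = (2/((k:ℝ)+1)) * ‖h‖ := by ring
      _ ≤ c * ‖h‖ := mul_le_mul_of_nonneg_right hk1 (norm_nonneg h)
    filter_upwards [Metric.ball_mem_nhds (0:X₁) (hδ k)] with h hh
    rw [mem_ball, dist_zero_right] at hh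
    have := key h hh
    exact this
  exact hder.differentiableAt

lemma forward {f : X₁ × X₂ → Y} {x : X₁ × X₂}
    (hd : DifferentiableAt ℝ (fun t : X₁ => f (t, x.2)) x.1) (k : ℕ) :
    ∃ n : ℕ, x ∈ Aset f n k := by
  set L := fderiv ℝ (fun t : X₁ => f (t, x.2)) x.1 with hLdef
  have hL := hd.hasFDerivAt
  rw [hasFDerivAt_iff_isLittleO_nhds_zero] at hL
  have hev := isLittleO_iff.mp hL (c := ((k:ℝ)+1)⁻¹) (by positivity)
  rw [Metric.eventually_nhds_iff] at hev
  obtain ⟨δ, hδ, hball⟩ := hev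
  obtain ⟨n, hn⟩ := exists_nat_ge (max ‖L‖ δ⁻¹)
  refine ⟨n, L, ?_, ?_⟩
  · have := le_trans (le_max_left ‖L‖ δ⁻¹) hn
    linarith
  · intro h hh
    have hδn : ((n:ℝ)+1)⁻¹ < δ := by
      have h1 : δ⁻¹ ≤ (n:ℝ) := le_trans (le_max_right _ _) hn
      have h2 : δ⁻¹ < (n:ℝ)+1 := by linarith
      have h3 : (0:ℝ) < δ⁻¹ := by positivity
      have h4 := inv_strictAnti₀ h3 h2
      rwa [inv_inv] at h4
    have hball' := hball (y := h) (by rw [dist_zero_right]; linarith)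
    calc ‖f (x.1 + h, x.2) - f (x.1, x.2) - L h‖ ≤ ((k:ℝ)+1)⁻¹ * ‖h‖ := hball'
    _ = ‖h‖ / ((k:ℝ)+1) := by ring

end PFAux

theorem isFSigmaDelta_partial_frechet_points
    {X₁ X₂ Y : Type*} [NormedAddCommGroup X₁] [NormedSpace ℝ X₁] [CompleteSpace X₁]
    [NormedAddCommGroup X₂] [NormedSpace ℝ X₂] [CompleteSpace X₂]
    [NormedAddCommGroup Y] [NormedSpace ℝ Y] [CompleteSpace Y]
    (f : X₁ × X₂ → Y) (hf : ∀ a₁ : X₁, Continuous (fun t : X₂ => f (a₁, t))) :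
    IsFSigmaDelta {x : X₁ × X₂ | DifferentiableAt ℝ (fun t : X₁ => f (t, x.2)) x.1} := by

  refine ⟨fun k => ⋃ n, closure (PFAux.Aset f n k), fun k =>
    ⟨fun n => closure (PFAux.Aset f n k), fun n => isClosed_closure, rfl⟩, ?_⟩
  ext x
  simp only [mem_setOf_eq, mem_iInter, mem_iUnion]
  constructor
  · intro hd k
    obtain ⟨n, hn⟩ := PFAux.forward hd k
    exact ⟨n, subset_closure hn⟩
  · intro h
    exact PFAux.backward hf h
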